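/- Let S be a commutative semiring and f : Σ* → S a word function. If f is recognized by a weighted automaton over S, then there exists a finitely generated subsemimodule M of the S-semimodule of all word functions Σ* → S such that f ∈ M and M is stable, i.e., for every word w ∈ Σ* and every g ∈ M, the function w⁻¹g defined by (w⁻¹g)(u) = g(w ∘ u) is also in M. -/
import Mathlib


open Matrix

def wordProd {S : Type*} [CommSemiring S] {A : Type*} {r : ℕ}
    (μ : A → Matrix (Fin r) (Fin r) S) (w : List A) : Matrix (Fin r) (Fin r) S :=
  (w.map μ).prod

lemma wordProd_append {S : Type*} [CommSemiring S] {A : Type*} {r : ℕ}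
    (μ : A → Matrix (Fin r) (Fin r) S) (w u : List A) :
    wordProd μ (w ++ u) = wordProd μ w * wordProd μ u := by
  simp [wordProd, List.map_append]

/-- If `f` is recognized by a weighted automaton over `S`, then `f` belongs to a
finitely generated stable subsemimodule of `S^{Σ*}`. -/
theorem recognizable_mem_fg_stable_submodule {S A : Type*} [CommSemiring S] [Fintype A]
    (f : List A → S)
    (h : ∃ (r : ℕ) (α γ : Fin r → S) (μ : A → Matrix (Fin r) (Fin r) S),
      ∀ w : List A, f w = α ⬝ᵥ (wordProd μ w *ᵥ γ)) :
    ∃ M : Submodule S (List A → S), M.FG ∧ f ∈ M ∧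
      ∀ (w : List A) (g : List A → S), g ∈ M → (fun u => g (w ++ u)) ∈ M := by
  obtain ⟨r, α, γ, μ, hf⟩ := h
  set g : Fin r → (List A → S) := fun i u => (wordProd μ u *ᵥ γ) i with hg
  refine ⟨Submodule.span S (Set.range g), Submodule.fg_span (Set.finite_range g), ?_, ?_⟩
  · have : f = ∑ i, α i • g i := by
      funext u
      simp [hf u, dotProduct, g, Finset.sum_apply]
    rw [this]
    exact Submodule.sum_mem _ fun i _ =>
      Submodule.smul_mem _ _ (Submodule.subset_span ⟨i, rfl⟩)
  · intro w p hp
    -- translation is linear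
    let T : (List A → S) →ₗ[S] (List A → S) :=
      { toFun := fun q => fun u => q (w ++ u)
        map_add' := fun a b => rfl
        map_smul' := fun c a => rfl }
    have key : ∀ i, T (g i) ∈ Submodule.span S (Set.range g) := by
      intro i
      have : T (g i) = ∑ j, wordProd μ w i j • g j := by
        funext u
        simp only [T, LinearMap.coe_mk, AddHom.coe_mk, g, Finset.sum_apply, Pi.smul_apply,
          smul_eq_mul, wordProd_append, ← Matrix.mulVec_mulVec]
        rfl
      rw [this]
      exact Submodule.sum_mem _ fun j _ =>
        Submodule.smul_mem _ _ (Submodule.subset_span ⟨j, rfl⟩)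
    have : T p ∈ Submodule.span S (Set.range g) := by
      refine Submodule.span_induction ?_ ?_ ?_ ?_ hp
      · rintro x ⟨i, rfl⟩; exact key i
      · simp
      · intro a b _ _ ha hb; rw [map_add]; exact Submodule.add_mem _ ha hb
      · intro c a _ ha; rw [_root_.map_smul]; exact Submodule.smul_mem _ _ ha
    exact this
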